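/- For an integer base b ≥ 2 and a prime s, with q_k = ∑_{j=0}^{s-1} b^{j·s^{k-1}}, for every k ≥ 2 the greatest common divisor of q_k and the product q_1·q_2·...·q_{k-1} divides s. -/

import Mathlib

open Finset

/-- Geometric sum divides `x^n - 1`. -/
lemma aux_geom_dvd (x n : ℕ) : (∑ i ∈ range n, x ^ i) ∣ x ^ n - 1 := by
  rcases Nat.eq_zero_or_pos x with hx | hx
  · subst hx
    rcases Nat.eq_zero_or_pos n with hn | hn
    · simp [hn]
    · simp [Nat.zero_pow, hn.ne']
  · have h1 : (1:ℕ) ≤ x ^ n := Nat.one_le_pow _ _ hx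
    rw [← Int.natCast_dvd_natCast]
    push_cast [h1]
    exact ⟨(x:ℤ) - 1, (geom_sum_mul (x:ℤ) n).symm⟩

lemma aux_one_add_pow {R : Type*} [CommRing R] (x : R) (hx : x * x = 0) (i : ℕ) :
    (1 + x) ^ i = 1 + (i : R) * x := by
  induction i with
  | zero => simp
  | succ n ih =>
    rw [pow_succ, ih]
    have h2 : (1 + (n:R) * x) * (1 + x) = 1 + ((n:R) + 1) * x + (n:R) * (x * x) := by ring
    rw [h2, hx]
    push_cast
    ring

theorem stmt_2 (b s : ℕ) (hb : 2 ≤ b) (hs : s.Prime) (k : ℕ) (hk : 2 ≤ k) :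
    Nat.gcd (∑ j ∈ Finset.range s, b ^ (j * s ^ (k - 1)))
      (∏ j ∈ Finset.Icc 1 (k - 1), (∑ i ∈ Finset.range s, b ^ (i * s ^ (j - 1)))) ∣ s := by
  have hspos : 0 < s := hs.pos
  have hs2 : 2 ≤ s := hs.two_le
  set t : ℕ := b ^ s ^ (k - 1) with ht
  have ht1 : 1 ≤ t := Nat.one_le_pow _ _ (by omega)
  set Q : ℕ := ∑ j ∈ Finset.range s, b ^ (j * s ^ (k - 1)) with hQ
  have hQ_eq : Q = ∑ j ∈ range s, t ^ j := by
    refine Finset.sum_congr rfl fun j _ => ?_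
    rw [ht, ← pow_mul, mul_comm]
  have hQ_ge : s ≤ Q := by
    rw [hQ_eq]
    calc s = ∑ _j ∈ range s, 1 := by simp
    _ ≤ ∑ j ∈ range s, t ^ j := Finset.sum_le_sum fun j _ => Nat.one_le_pow _ _ (by omega)
  -- each q_j divides Q - s
  have hkeydvd : ∀ j ∈ Finset.Icc 1 (k - 1),
      (∑ i ∈ Finset.range s, b ^ (i * s ^ (j - 1))) ∣ Q - s := by
    intro j hj
    simp only [Finset.mem_Icc] at hj
    set u : ℕ := b ^ s ^ (j - 1) with hu
    have hq_eq : (∑ i ∈ Finset.range s, b ^ (i * s ^ (j - 1))) = ∑ i ∈ range s, u ^ i := by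
      refine Finset.sum_congr rfl fun i _ => ?_
      rw [hu, ← pow_mul, mul_comm]
    rw [hq_eq]
    -- q_j ∣ b^(s^j) - 1
    have h1 : (∑ i ∈ range s, u ^ i) ∣ b ^ s ^ j - 1 := by
      have hj1 : j - 1 + 1 = j := by omega
      have := aux_geom_dvd u s
      rwa [hu, ← pow_mul, ← pow_succ, hj1] at this
    -- Q - s = ∑ (t^i - 1)
    have hsum : Q - s = ∑ i ∈ range s, (t ^ i - 1) := by
      have h2 : ∑ i ∈ range s, t ^ i = (∑ i ∈ range s, (t ^ i - 1)) + s := by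
        calc ∑ i ∈ range s, t ^ i = ∑ i ∈ range s, ((t ^ i - 1) + 1) := by
              refine Finset.sum_congr rfl fun i _ => ?_
              have : 1 ≤ t ^ i := Nat.one_le_pow _ _ (by omega)
              omega
        _ = (∑ i ∈ range s, (t ^ i - 1)) + ∑ _i ∈ range s, 1 := Finset.sum_add_distrib
        _ = (∑ i ∈ range s, (t ^ i - 1)) + s := by simp
      omega
    rw [hsum]
    refine Finset.dvd_sum fun i _ => h1.trans ?_
    have hexp : i * s ^ (k - 1) = s ^ j * (i * s ^ (k - 1 - j)) := by
      rw [← mul_assoc, mul_comm (s ^ j) i, mul_assoc, ← pow_add]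
      congr 2
      omega
    have h3 : t ^ i = (b ^ s ^ j) ^ (i * s ^ (k - 1 - j)) := by
      rw [ht, ← pow_mul, ← pow_mul, mul_comm (s ^ (k-1)) i, hexp]
    rw [h3]
    simpa using Nat.sub_dvd_pow_sub_pow (b ^ s ^ j) 1 (i * s ^ (k - 1 - j))
  -- every prime factor of the gcd is s
  set P : ℕ := ∏ j ∈ Finset.Icc 1 (k - 1), (∑ i ∈ Finset.range s, b ^ (i * s ^ (j - 1))) with hP
  have hprime : ∀ p, p.Prime → p ∣ Nat.gcd Q P → p = s := by
    intro p hp hpd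
    have hpQ : p ∣ Q := hpd.trans (Nat.gcd_dvd_left _ _)
    have hpP : p ∣ P := hpd.trans (Nat.gcd_dvd_right _ _)
    obtain ⟨j, hj, hpj⟩ := hp.prime.exists_mem_finset_dvd hpP
    have hpQs : p ∣ Q - s := hpj.trans (hkeydvd j hj)
    have hps : p ∣ s := by
      have := Nat.dvd_sub hpQ hpQs
      rwa [Nat.sub_sub_self hQ_ge] at this
    exact (Nat.Prime.eq_one_or_self_of_dvd hs p hps).resolve_left hp.one_lt.ne'
  -- s^2 does not divide Q
  have hnotsq : ¬ (s * s ∣ Q) := by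
    intro hdvd
    have hsQ : s ∣ Q := (dvd_mul_right s s).trans hdvd
    rcases eq_or_ne s 2 with h2 | h2
    · -- s = 2 : Q = 1 + t, t a perfect square, so 4 ∤ Q
      subst h2
      have hQ2 : Q = 1 + t := by
        rw [hQ_eq]
        simp [Finset.sum_range_succ]
      set c : ℕ := b ^ 2 ^ (k - 2) with hc
      have htc : t = c * c := by
        rw [ht, hc, ← pow_add]
        congr 1
        have h3 : 2 ^ (k - 1) = 2 ^ (k - 2) * 2 := by
          rw [← pow_succ]
          congr 1
          omega
        omega
      have hcm : c % 4 < 4 := Nat.mod_lt _ (by norm_num)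
      have hmm : t % 4 = (c % 4) * (c % 4) % 4 := by
        rw [htc, Nat.mul_mod]
      have ht4 : t % 4 = 0 ∨ t % 4 = 1 := by
        interval_cases h : c % 4 <;> omega
      rw [hQ2] at hdvd
      omega
    · -- s odd
      have hodd : Odd s := hs.odd_of_ne_two h2
      haveI : Fact s.Prime := ⟨hs⟩
      haveI : NeZero (s * s) := ⟨by positivity⟩
      -- first: s ∣ t - 1
      have hst : s ∣ t - 1 := by
        have h0 : ((Q : ℕ) : ZMod s) = 0 := (ZMod.natCast_eq_zero_iff _ _).2 hsQ
        rw [hQ_eq] at h0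
        push_cast at h0
        have hgm := geom_sum_mul ((t : ℕ) : ZMod s) s
        rw [h0, zero_mul, ZMod.pow_card] at hgm
        have ht1z : ((t : ℕ) : ZMod s) = 1 := by
          have := eq_of_sub_eq_zero hgm.symm
          exact this
        have : ((t - 1 : ℕ) : ZMod s) = 0 := by
          rw [Nat.cast_sub ht1, ht1z]
          simp
        exact (ZMod.natCast_eq_zero_iff _ _).1 this
      obtain ⟨m, hm⟩ := hst
      have htm : t = 1 + s * m := by omega
      -- now compute Q mod s^2
      set x : ZMod (s * s) := ((s * m : ℕ) : ZMod (s * s)) with hx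
      have hxx : x * x = 0 := by
        rw [hx, ← Nat.cast_mul]
        exact (ZMod.natCast_eq_zero_iff _ _).2 ⟨m * m, by ring⟩
      obtain ⟨w, hw⟩ := hodd
      have hgauss : ∑ i ∈ range s, i = s * w := by
        have h := Finset.sum_range_id_mul_two s
        have hs1 : s - 1 = 2 * w := by omega
        rw [hs1] at h
        have h2' : s * (2 * w) = (s * w) * 2 := by ring
        omega
      have hQz : ((Q : ℕ) : ZMod (s * s)) = ((s : ℕ) : ZMod (s * s)) := by
        rw [hQ_eq]
        push_cast
        calc ∑ i ∈ range s, ((t : ℕ) : ZMod (s*s)) ^ i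
            = ∑ i ∈ range s, (1 + x) ^ i := by
              refine Finset.sum_congr rfl fun i _ => ?_
              rw [htm, hx]
              push_cast
              ring_nf
          _ = ∑ i ∈ range s, (1 + (i : ZMod (s*s)) * x) := by
              exact Finset.sum_congr rfl fun i _ => aux_one_add_pow x hxx i
          _ = ∑ _i ∈ range s, (1 : ZMod (s*s)) + (∑ i ∈ range s, (i : ZMod (s*s))) * x := by
              rw [Finset.sum_add_distrib, Finset.sum_mul]
          _ = ((s : ℕ) : ZMod (s*s)) := by
              have hz : (∑ i ∈ range s, (i : ZMod (s*s))) * x = 0 := by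
                rw [← Nat.cast_sum, hgauss, hx, ← Nat.cast_mul]
                exact (ZMod.natCast_eq_zero_iff _ _).2 ⟨w * m, by ring⟩
              rw [hz]
              simp
      have h0 : ((Q : ℕ) : ZMod (s * s)) = 0 := (ZMod.natCast_eq_zero_iff _ _).2 hdvd
      rw [h0] at hQz
      have : s * s ∣ s := (ZMod.natCast_eq_zero_iff _ _).1 hQz.symm
      have := Nat.le_of_dvd (by omega) this
      nlinarith
  -- conclude
  set d : ℕ := Nat.gcd Q P with hd
  have hdQ : d ∣ Q := Nat.gcd_dvd_left _ _
  rcases eq_or_ne d 1 with h1 | h1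
  · rw [h1]; exact one_dvd s
  obtain ⟨p, hp, hpd⟩ := Nat.exists_prime_and_dvd h1
  have hps := hprime p hp hpd
  subst hps
  obtain ⟨e, he⟩ := hpd
  rcases eq_or_ne e 1 with he1 | he1
  · rw [he, he1, mul_one]
  obtain ⟨r, hr, hre⟩ := Nat.exists_prime_and_dvd he1
  have hrd : r ∣ d := hre.trans ⟨p, by rw [he]; ring⟩
  have hrs := hprime r hr hrd
  subst hrs
  exfalso
  apply hnotsq
  obtain ⟨f, hf⟩ := hre
  have : r * r ∣ d := ⟨f, by rw [he, hf]; ring⟩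
  exact this.trans hdQ
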